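/- Let μ be a Radon outer measure on ℝ^n with spt μ ≠ ∅ and E ⊂ ℝ^n. Define the density degree d_E^μ: ℝ^n → {−n} ∪ [0,∞] by d_E^μ(x) = sup{ h ∈ [0,∞) : x ∈ E^{μ,h} } if x ∈ E^{μ,0}, and d_E^μ(x) = −n otherwise. Then d_E^μ is a μ-measurable function (indeed each superlevel set {x : d_E^μ(x) ≥ a} is μ-measurable for every a ∈ ℝ). -/

import Mathlib

open MeasureTheory Metric Filter Set Topology
open scoped ENNReal NNReal

noncomputable section

/-- The support of a measure `μ` on `ℝ^n`: points all of whose balls have positive measure. -/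
def spt {n : ℕ} (μ : Measure (EuclideanSpace ℝ (Fin n))) : Set (EuclideanSpace ℝ (Fin n)) :=
  {x | ∀ r : ℝ, 0 < r → 0 < μ (Metric.ball x r)}

/-- The set of `h`-superdensity points of `E` with respect to `μ`. -/
def sdp {n : ℕ} (μ : Measure (EuclideanSpace ℝ (Fin n))) (h : ℝ)
    (E : Set (EuclideanSpace ℝ (Fin n))) : Set (EuclideanSpace ℝ (Fin n)) :=
  {x | x ∈ spt μ ∧
    Filter.Tendsto
      (fun r : ℝ => μ (Metric.ball x r \ E) / (μ (Metric.ball x r) * ENNReal.ofReal (r ^ h)))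
      (nhdsWithin 0 (Set.Ioi 0)) (nhds 0)}

/-- The base operator `b^{μ,h}` associated to `μ` and `h`. -/
def baseOp {n : ℕ} (μ : Measure (EuclideanSpace ℝ (Fin n))) (h : ℝ)
    (A : Set (EuclideanSpace ℝ (Fin n))) : Set (EuclideanSpace ℝ (Fin n)) :=
  {x | x ∈ spt μ ∧
    0 < Filter.limsup
      (fun r : ℝ => μ (Metric.ball x r ∩ A) / (μ (Metric.ball x r) * ENNReal.ofReal (r ^ h)))
      (nhdsWithin 0 (Set.Ioi 0))}

/-- The density degree of `E` with respect to `μ`, with values in `{-n} ∪ [0,∞] ⊆ EReal`. -/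
def densityDegree {n : ℕ} (μ : Measure (EuclideanSpace ℝ (Fin n)))
    (E : Set (EuclideanSpace ℝ (Fin n))) (x : EuclideanSpace ℝ (Fin n)) : EReal :=
  @ite _ (x ∈ sdp μ 0 E) (Classical.propDecidable _)
    (sSup ((fun h : ℝ => (h : EReal)) '' {h : ℝ | 0 ≤ h ∧ x ∈ sdp μ h E}))
    (-(n : EReal))

namespace DensityDegreeAux

variable {n : ℕ}

lemma isClosed_spt (μ : Measure (EuclideanSpace ℝ (Fin n))) : IsClosed (spt μ) := by
  rw [← isOpen_compl_iff, Metric.isOpen_iff]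
  intro x hx
  simp only [spt, mem_compl_iff, mem_setOf_eq, not_forall] at hx
  obtain ⟨r, hr⟩ := hx
  push_neg at hr
  obtain ⟨hr0, hrμ⟩ := hr
  refine ⟨r / 2, by positivity, fun y hy => ?_⟩
  simp only [spt, mem_compl_iff, mem_setOf_eq, not_forall]
  refine ⟨r / 2, ?_⟩
  push_neg
  refine ⟨by positivity, ?_⟩
  have hsub : ball y (r / 2) ⊆ ball x r := by
    apply ball_subset_ball'
    have := mem_ball.1 hy
    linarith
  have : μ (ball y (r / 2)) ≤ μ (ball x r) := measure_mono hsub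
  simpa [le_antisymm (this.trans hrμ) zero_le] using le_refl (0 : ℝ≥0∞)

lemma exists_lt_measure_ball_inter {μ : Measure (EuclideanSpace ℝ (Fin n))}
    {A : Set (EuclideanSpace ℝ (Fin n))} {x : EuclideanSpace ℝ (Fin n)} {r : ℝ} (hr : 0 < r)
    {t : ℝ≥0∞} (ht : t < μ (ball x r ∩ A)) :
    ∃ s : ℝ, 0 < s ∧ s < r ∧ t < μ (ball x s ∩ A) := by
  have hmono : Monotone (fun k : ℕ => ball x (r - r / (k + 2)) ∩ A) := by
    intro k l hkl
    apply inter_subset_inter_left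
    apply ball_subset_ball
    have h1 : (0:ℝ) < (k:ℝ) + 2 := by positivity
    have h2 : ((k:ℝ) + 2) ≤ (l:ℝ) + 2 := by
      have : (k:ℝ) ≤ l := by exact_mod_cast hkl
      linarith
    have := div_le_div_of_nonneg_left hr.le h1 h2
    linarith
  have hU : (⋃ k : ℕ, (ball x (r - r / (k + 2)) ∩ A)) = ball x r ∩ A := by
    ext y
    simp only [mem_iUnion, mem_inter_iff, mem_ball]
    constructor
    · rintro ⟨k, hk, hA⟩
      have h1 : (0:ℝ) < (k:ℝ) + 2 := by positivity
      have h2 : 0 ≤ r / ((k:ℝ) + 2) := by positivity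
      exact ⟨by linarith, hA⟩
    · rintro ⟨hy, hA⟩
      have h1 : 0 < r - dist y x := by linarith
      obtain ⟨k, hk⟩ := exists_nat_gt (r / (r - dist y x))
      refine ⟨k, ?_, hA⟩
      have hk2 : (0:ℝ) < (k:ℝ) + 2 := by positivity
      have h2 : r / (r - dist y x) < (k:ℝ) + 2 := by linarith
      have h3 : r < ((k:ℝ) + 2) * (r - dist y x) := (div_lt_iff₀ h1).1 h2
      have h4 : r / ((k:ℝ) + 2) < r - dist y x := (div_lt_iff₀ hk2).2 (by linarith [h3])
      linarith
  rw [← hU, hmono.measure_iUnion] at ht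
  obtain ⟨k, hk⟩ := lt_iSup_iff.1 ht
  refine ⟨r - r / (k + 2), ?_, ?_, hk⟩
  · have h1 : r / ((k:ℝ) + 2) < r := by
      apply div_lt_self hr
      have : (0:ℝ) ≤ (k:ℝ) := by positivity
      linarith
    linarith
  · have : 0 < r / ((k:ℝ) + 2) := by positivity
    linarith

lemma measure_closedBall_iInf (μ : Measure (EuclideanSpace ℝ (Fin n)))
    [IsFiniteMeasureOnCompacts μ] (x : EuclideanSpace ℝ (Fin n)) (q' : ℝ) :
    μ (closedBall x q') = ⨅ k : ℕ, μ (closedBall x (q' + 1 / (k + 1))) := by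
  have hI : (⋂ k : ℕ, closedBall x (q' + 1 / (k + 1))) = closedBall x q' := by
    ext y
    simp only [mem_iInter, mem_closedBall]
    constructor
    · intro hy
      refine le_of_forall_pos_le_add fun ε hε => ?_
      obtain ⟨k, hk⟩ := exists_nat_one_div_lt hε
      exact (hy k).trans (by linarith)
    · intro hy k
      have : (0:ℝ) ≤ 1 / ((k:ℝ) + 1) := by positivity
      linarith
  rw [← hI]
  refine Antitone.measure_iInter ?_ (fun k => measurableSet_closedBall.nullMeasurableSet) ?_
  · intro k l hkl
    apply closedBall_subset_closedBall
    have h1 : (0:ℝ) < (k:ℝ) + 1 := by positivity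
    have h2 : ((k:ℝ) + 1) ≤ (l:ℝ) + 1 := by
      have : (k:ℝ) ≤ l := by exact_mod_cast hkl
      linarith
    have := one_div_le_one_div_of_le h1 h2
    linarith
  · exact ⟨0, ((isCompact_closedBall x _).measure_lt_top).ne⟩

/-- The open test sets. -/
def Vset (μ : Measure (EuclideanSpace ℝ (Fin n))) (h : ℝ) (A : Set (EuclideanSpace ℝ (Fin n)))
    (c : ℝ≥0∞) (q q' : ℝ) : Set (EuclideanSpace ℝ (Fin n)) :=
  {x | c * μ (closedBall x q') * ENNReal.ofReal (q ^ h) < μ (ball x q ∩ A)}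

lemma isOpen_Vset (μ : Measure (EuclideanSpace ℝ (Fin n))) [IsFiniteMeasureOnCompacts μ]
    (h : ℝ) (A : Set (EuclideanSpace ℝ (Fin n))) {c : ℝ≥0∞} {q q' : ℝ}
    (hc : c ≠ ∞) (hq : 0 < q) : IsOpen (Vset μ h A c q q') := by
  rw [Metric.isOpen_iff]
  intro x hx
  obtain ⟨t, ht1, ht2⟩ := exists_between (show c * μ (closedBall x q') * ENNReal.ofReal (q ^ h)
    < μ (ball x q ∩ A) from hx)
  obtain ⟨s, hs0, hsq, hts⟩ := exists_lt_measure_ball_inter hq ht2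
  have key : ∃ k : ℕ, c * μ (closedBall x (q' + 1 / (k + 1))) * ENNReal.ofReal (q ^ h) < t := by
    by_contra hcon
    push_neg at hcon
    have hle : t ≤ c * μ (closedBall x q') * ENNReal.ofReal (q ^ h) := by
      rcases eq_or_ne c 0 with rfl | hc0
      · simpa using hcon 0
      · have heq : c * μ (closedBall x q') * ENNReal.ofReal (q ^ h)
            = ⨅ k : ℕ, c * μ (closedBall x (q' + 1 / (k + 1))) * ENNReal.ofReal (q ^ h) := by
          rw [measure_closedBall_iInf μ x q']
          rw [ENNReal.mul_iInf_of_ne hc0 hc]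
          rw [ENNReal.iInf_mul_of_ne
            (ENNReal.ofReal_pos.2 (Real.rpow_pos_of_pos hq h)).ne' ENNReal.ofReal_ne_top]
        rw [heq]
        exact le_iInf hcon
    exact absurd hle (not_le.2 ht1)
  obtain ⟨k, hk⟩ := key
  have hε : (0:ℝ) < 1 / ((k:ℝ) + 1) := by positivity
  refine ⟨min (q - s) (1 / ((k:ℝ) + 1)), lt_min (by linarith) hε, fun y hy => ?_⟩
  have hy1 : dist y x < q - s := (mem_ball.1 hy).trans_le (min_le_left _ _)
  have hy2 : dist y x < 1 / ((k:ℝ) + 1) := (mem_ball.1 hy).trans_le (min_le_right _ _)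
  show c * μ (closedBall y q') * ENNReal.ofReal (q ^ h) < μ (ball y q ∩ A)
  have h1 : closedBall y q' ⊆ closedBall x (q' + 1 / ((k:ℝ) + 1)) :=
    closedBall_subset_closedBall' (by linarith)
  have h2 : ball x s ⊆ ball y q := ball_subset_ball' (by rw [dist_comm]; linarith)
  calc c * μ (closedBall y q') * ENNReal.ofReal (q ^ h)
      ≤ c * μ (closedBall x (q' + 1 / ((k:ℝ) + 1))) * ENNReal.ofReal (q ^ h) := by
        exact mul_le_mul_left (mul_le_mul_right (measure_mono h1) c) _
    _ < t := hk
    _ < μ (ball x s ∩ A) := hts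
    _ ≤ μ (ball y q ∩ A) := measure_mono (inter_subset_inter_left _ h2)

lemma lt_div_iff_aux {μ : Measure (EuclideanSpace ℝ (Fin n))} {E : Set (EuclideanSpace ℝ (Fin n))}
    {x : EuclideanSpace ℝ (Fin n)} {h r : ℝ} {c : ℝ≥0∞} (hc0 : c ≠ 0) (hc : c ≠ ∞) :
    c < μ (ball x r \ E) / (μ (ball x r) * ENNReal.ofReal (r ^ h)) ↔
      c * (μ (ball x r) * ENNReal.ofReal (r ^ h)) < μ (ball x r ∩ Eᶜ) := by
  rw [diff_eq]
  exact ENNReal.lt_div_iff_mul_lt (Or.inr hc) (Or.inr hc0)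

lemma cm_ne_zero (m : ℕ) : ((m : ℝ≥0∞) + 1)⁻¹ ≠ 0 :=
  ENNReal.inv_ne_zero.2 (by simp [ENNReal.add_ne_top])

lemma cm_ne_top (m : ℕ) : ((m : ℝ≥0∞) + 1)⁻¹ ≠ ∞ :=
  ENNReal.inv_ne_top.2 (by simp)

lemma sdp_eq (μ : Measure (EuclideanSpace ℝ (Fin n))) [IsFiniteMeasureOnCompacts μ]
    (E : Set (EuclideanSpace ℝ (Fin n))) {h : ℝ} (hh : 0 ≤ h) :
    sdp μ h E = spt μ \ ⋃ (m : ℕ), ⋂ (k : ℕ), ⋃ (q : ℚ) (q' : ℚ)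
      (_ : 0 < (q:ℝ) ∧ (q:ℝ) < (q':ℝ) ∧ (q':ℝ) < 1 / (k + 1)),
      Vset μ h Eᶜ ((m : ℝ≥0∞) + 1)⁻¹ q q' := by
  ext x
  simp only [sdp, mem_setOf_eq, mem_diff]
  constructor
  · rintro ⟨hspt, htend⟩
    refine ⟨hspt, fun hmem => ?_⟩
    simp only [mem_iUnion, mem_iInter] at hmem
    obtain ⟨m, hm⟩ := hmem
    set c : ℝ≥0∞ := ((m : ℝ≥0∞) + 1)⁻¹ with hcdef
    have hc0 := cm_ne_zero m
    have hct := cm_ne_top m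
    have hev := ENNReal.tendsto_nhds_zero.1 htend c (pos_iff_ne_zero.2 hc0)
    obtain ⟨u, hu, hsub⟩ := mem_nhdsGT_iff_exists_Ioo_subset.1 hev
    obtain ⟨k, hk⟩ := exists_nat_one_div_lt (show (0:ℝ) < u from hu)
    obtain ⟨q, q', ⟨hq0, hqq', hq'⟩, hV⟩ := hm k
    have hqu : (q:ℝ) < u := by linarith
    have hqmem : (q:ℝ) ∈ Ioo (0:ℝ) u := ⟨hq0, hqu⟩
    have hFle := hsub hqmem
    have hlt : c < μ (ball x (q:ℝ) \ E) /
        (μ (ball x (q:ℝ)) * ENNReal.ofReal ((q:ℝ) ^ h)) := by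
      rw [lt_div_iff_aux hc0 hct]
      have hbs : ball x (q:ℝ) ⊆ closedBall x (q':ℝ) :=
        ball_subset_closedBall.trans (closedBall_subset_closedBall hqq'.le)
      calc c * (μ (ball x (q:ℝ)) * ENNReal.ofReal ((q:ℝ) ^ h))
          ≤ c * μ (closedBall x (q':ℝ)) * ENNReal.ofReal ((q:ℝ) ^ h) := by
            rw [mul_assoc]
            exact mul_le_mul_right (mul_le_mul_left (measure_mono hbs) _) c
        _ < μ (ball x (q:ℝ) ∩ Eᶜ) := hV
    exact absurd hFle (not_le.2 hlt)
  · rintro ⟨hspt, hnot⟩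
    refine ⟨hspt, ?_⟩
    by_contra hnt
    rw [ENNReal.tendsto_nhds_zero] at hnt
    push_neg at hnt
    obtain ⟨ε, hε, hfreq⟩ := hnt
    obtain ⟨m, hm⟩ := ENNReal.exists_inv_nat_lt hε.ne'
    set c : ℝ≥0∞ := ((m : ℝ≥0∞) + 1)⁻¹ with hcdef
    have hc0 := cm_ne_zero m
    have hct := cm_ne_top m
    have hcε : c < ε := by
      refine lt_of_le_of_lt ?_ hm
      exact ENNReal.inv_le_inv.2 (le_add_of_nonneg_right zero_le_one)
    have hfreq' : ∃ᶠ r in nhdsWithin 0 (Set.Ioi 0),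
        c < μ (ball x r \ E) / (μ (ball x r) * ENNReal.ofReal (r ^ h)) := by
      refine hfreq.mono fun r hr => ?_
      exact hcε.trans hr
    refine hnot ?_
    simp only [mem_iUnion, mem_iInter]
    refine ⟨m, fun k => ?_⟩
    have hIoo : Ioo (0:ℝ) (1 / ((k:ℝ) + 1)) ∈ nhdsWithin (0:ℝ) (Set.Ioi 0) :=
      Ioo_mem_nhdsGT_of_mem ⟨le_refl 0, by positivity⟩
    obtain ⟨r, hcr, hr⟩ :=
      (hfreq'.and_eventually (eventually_of_mem hIoo fun r hr => hr)).exists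
    have hmul := (lt_div_iff_aux hc0 hct).1 hcr
    obtain ⟨s, hs0, hsr, hts⟩ := exists_lt_measure_ball_inter hr.1 hmul
    obtain ⟨q, hsq, hqr⟩ := exists_rat_btwn hsr
    obtain ⟨q', hqq', hq'r⟩ := exists_rat_btwn hqr
    refine ⟨q, q', ⟨hs0.trans hsq, hqq', hq'r.trans hr.2⟩, ?_⟩
    show c * μ (closedBall x (q':ℝ)) * ENNReal.ofReal ((q:ℝ) ^ h) < μ (ball x (q:ℝ) ∩ Eᶜ)
    calc c * μ (closedBall x (q':ℝ)) * ENNReal.ofReal ((q:ℝ) ^ h)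
        ≤ c * (μ (ball x r) * ENNReal.ofReal (r ^ h)) := by
          rw [mul_assoc]
          refine mul_le_mul_right ?_ c
          exact mul_le_mul' (measure_mono (closedBall_subset_ball hq'r))
            (ENNReal.ofReal_le_ofReal
              (Real.rpow_le_rpow (by linarith : (0:ℝ) ≤ (q:ℝ)) (by linarith) hh))
      _ < μ (ball x s ∩ Eᶜ) := hts
      _ ≤ μ (ball x (q:ℝ) ∩ Eᶜ) := measure_mono (inter_subset_inter_left _
          (ball_subset_ball hsq.le))

lemma measurableSet_sdp (μ : Measure (EuclideanSpace ℝ (Fin n))) [IsFiniteMeasureOnCompacts μ]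
    (E : Set (EuclideanSpace ℝ (Fin n))) {h : ℝ} (hh : 0 ≤ h) :
    MeasurableSet (sdp μ h E) := by
  rw [sdp_eq μ E hh]
  refine ((isClosed_spt μ).measurableSet).diff ?_
  refine MeasurableSet.iUnion fun m => MeasurableSet.iInter fun k => ?_
  refine MeasurableSet.iUnion fun q => MeasurableSet.iUnion fun q' => ?_
  refine MeasurableSet.iUnion fun hcond => ?_
  exact (isOpen_Vset μ h Eᶜ (cm_ne_top m) hcond.1).measurableSet

lemma sdp_antitone (μ : Measure (EuclideanSpace ℝ (Fin n)))
    (E : Set (EuclideanSpace ℝ (Fin n))) {h h' : ℝ} (h0 : 0 ≤ h') (hle : h' ≤ h) :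
    sdp μ h E ⊆ sdp μ h' E := by
  rintro x ⟨hx, htend⟩
  refine ⟨hx, ENNReal.tendsto_nhds_zero.2 fun ε hε => ?_⟩
  have hev := ENNReal.tendsto_nhds_zero.1 htend ε hε
  have h1 : Ioo (0:ℝ) 1 ∈ nhdsWithin (0:ℝ) (Set.Ioi 0) :=
    Ioo_mem_nhdsGT_of_mem ⟨le_refl 0, one_pos⟩
  filter_upwards [hev, eventually_of_mem h1 fun r hr => hr] with r hF hr
  refine le_trans ?_ hF
  refine ENNReal.div_le_div_left ?_ _
  exact mul_le_mul_right
    (ENNReal.ofReal_le_ofReal (Real.rpow_le_rpow_of_exponent_ge hr.1 hr.2.le hle)) _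

end DensityDegreeAux

open DensityDegreeAux in
theorem stmt_17 {n : ℕ} (μ : Measure (EuclideanSpace ℝ (Fin n)))
    [IsLocallyFiniteMeasure μ] [μ.Regular] (hspt : (spt μ).Nonempty)
    (E : Set (EuclideanSpace ℝ (Fin n))) :
    ∀ a : ℝ, NullMeasurableSet {x | (a : EReal) ≤ densityDegree μ E x} μ := by
  intro a
  have hn0 : -((n : ℕ) : EReal) ≤ 0 := by
    rw [← EReal.coe_coe_eq_natCast, ← EReal.coe_neg]
    exact EReal.coe_nonpos.2 (neg_nonpos.2 (Nat.cast_nonneg n))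
  have hzero_mem : ∀ x ∈ sdp μ 0 E,
      (0 : EReal) ≤ sSup ((fun h : ℝ => (h : EReal)) '' {h : ℝ | 0 ≤ h ∧ x ∈ sdp μ h E}) := by
    intro x hx
    refine le_sSup ?_
    exact ⟨0, ⟨le_refl 0, hx⟩, by simp⟩
  by_cases h1 : (a : EReal) ≤ -((n : ℕ) : EReal)
  · have : {x | (a : EReal) ≤ densityDegree μ E x} = Set.univ := by
      ext x
      simp only [mem_setOf_eq, mem_univ, iff_true]
      unfold densityDegree
      split_ifs with hx
      · exact le_trans (h1.trans hn0) (hzero_mem x hx)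
      · exact h1
    rw [this]
    exact MeasurableSet.univ.nullMeasurableSet
  · by_cases h2 : a ≤ 0
    · have heq : {x | (a : EReal) ≤ densityDegree μ E x} = sdp μ 0 E := by
        ext x
        simp only [mem_setOf_eq]
        unfold densityDegree
        split_ifs with hx
        · simp only [hx, iff_true]
          exact le_trans (by exact_mod_cast h2) (hzero_mem x hx)
        · simp only [hx, iff_false]
          intro hcon
          exact h1 hcon
      rw [heq]
      exact (measurableSet_sdp μ E (le_refl 0)).nullMeasurableSet
    · push_neg at h2
      have heq : {x | (a : EReal) ≤ densityDegree μ E x} =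
          ⋂ (q : ℚ) (_ : 0 ≤ (q:ℝ) ∧ (q:ℝ) < a), sdp μ (q:ℝ) E := by
        ext x
        simp only [mem_setOf_eq, mem_iInter]
        constructor
        · intro hax q hq
          have hx : x ∈ sdp μ 0 E := by
            by_contra hx
            unfold densityDegree at hax
            rw [if_neg hx] at hax
            exact h1 hax
          unfold densityDegree at hax
          rw [if_pos hx] at hax
          have hqa : ((q:ℝ) : EReal) < (a : EReal) := EReal.coe_lt_coe_iff.2 hq.2
          obtain ⟨b, hb, hqb⟩ := lt_sSup_iff.1 (hqa.trans_le hax)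
          obtain ⟨h', ⟨hh'0, hxh'⟩, rfl⟩ := hb
          have hqh' : (q:ℝ) ≤ h' := (EReal.coe_le_coe_iff.1 hqb.le)
          exact sdp_antitone μ E hq.1 hqh' hxh'
        · intro hq
          have hx : x ∈ sdp μ 0 E := by
            have := hq 0 ⟨by norm_num, by exact_mod_cast h2⟩
            simpa using this
          unfold densityDegree
          rw [if_pos hx]
          refine le_of_forall_lt fun c hc => ?_
          rcases lt_or_ge c 0 with hc0 | hc0
          · exact hc0.trans_le (hzero_mem x hx)
          · obtain ⟨p, hcp, hpa⟩ := EReal.exists_rat_btwn_of_lt hc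
            have hp0 : 0 ≤ ((p:ℝ) : ℝ) := by
              have : (0 : EReal) ≤ ((p:ℝ) : EReal) := le_of_lt (hc0.trans_lt hcp)
              exact_mod_cast EReal.coe_nonneg.1 this
            have hpa' : ((p:ℚ):ℝ) < a := EReal.coe_lt_coe_iff.1 hpa
            have hxp : x ∈ sdp μ ((p:ℚ):ℝ) E := hq p ⟨hp0, hpa'⟩
            refine hcp.trans_le (le_sSup ?_)
            exact ⟨((p:ℚ):ℝ), ⟨hp0, hxp⟩, rfl⟩
      rw [heq]
      refine MeasurableSet.nullMeasurableSet ?_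
      refine MeasurableSet.iInter fun q => MeasurableSet.iInter fun hq => ?_
      exact measurableSet_sdp μ E hq.1
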